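/- For positive integers n, m and integer k with 0 ≤ k ≤ n·m, the quantity H(k) = Σ_{i=0}^{n} (-1)^i C(n,i) C(n-1+k-i·m, n-1) is nonnegative, where binomial coefficients with negative upper argument are taken to be 0. -/

import Mathlib

/-- Integer binomial coefficient, zero for negative upper argument. -/
def ch (a : ℤ) (b : ℕ) : ℤ := if a < 0 then 0 else ((a.toNat).choose b : ℤ)

open PowerSeries Finset

/-- Nonnegativity of the Hodge numbers of the diagonal polynomial `x₁^m + ⋯ + x_n^m`. -/
theorem stmt5 (n m k : ℕ) (hn : 0 < n) (hm : 0 < m) (hk : k ≤ n * m) :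
    0 ≤ ∑ i ∈ Finset.range (n + 1),
        (-1 : ℤ) ^ i * (n.choose i : ℤ) * ch ((n : ℤ) - 1 + k - i * m) (n - 1) := by
  set P : ℤ⟦X⟧ := ∑ j ∈ range m, X ^ j with hP
  -- coefficients of P are nonnegative
  have hPco : ∀ j, 0 ≤ coeff j P := by
    intro j
    rw [hP, map_sum]
    apply Finset.sum_nonneg
    intro i _
    rw [coeff_X_pow]
    split <;> norm_num
  -- coefficients of P ^ N are nonnegative
  have hnonneg : ∀ N j, 0 ≤ coeff j (P ^ N) := by
    intro N
    induction N with
    | zero =>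
      intro j
      simp only [pow_zero, coeff_one]
      split <;> norm_num
    | succ N ih =>
      intro j
      rw [pow_succ, coeff_mul]
      apply Finset.sum_nonneg
      intro p _
      exact mul_nonneg (ih p.1) (hPco p.2)
  -- geometric series identity
  have hgeom : P * (1 - X) = 1 - X ^ m := by
    have := geom_sum_mul (X : ℤ⟦X⟧) m
    rw [hP]
    linear_combination -this
  set Q : ℤ⟦X⟧ := (invOneSubPow ℤ n).val with hQ
  have hQcoeff : ∀ j, coeff j Q = ((n - 1 + j).choose (n - 1) : ℤ) := by
    intro j
    rw [hQ, invOneSubPow_val_eq_mk_sub_one_add_choose_of_pos ℤ n hn, coeff_mk]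
  -- P ^ n = (1 - X^m)^n * Q
  have hkey : P ^ n = (1 - X ^ m) ^ n * Q := by
    have h1 : ((1 - X : ℤ⟦X⟧) ^ n) * Q = 1 := by
      rw [hQ, ← invOneSubPow_inv_eq_one_sub_pow]
      exact (invOneSubPow ℤ n).inv_val
    calc P ^ n = P ^ n * (((1 - X : ℤ⟦X⟧) ^ n) * Q) := by rw [h1, mul_one]
      _ = (1 - X ^ m) ^ n * Q := by rw [← mul_assoc, ← mul_pow, hgeom]
  -- expand (1 - X^m)^n via add_pow
  have hexp : (1 - X ^ m : ℤ⟦X⟧) ^ n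
      = ∑ i ∈ range (n + 1), C ((-1 : ℤ) ^ i * (n.choose i : ℤ)) * X ^ (m * i) := by
    have := add_pow (-(X ^ m) : ℤ⟦X⟧) 1 n
    rw [show (-(X ^ m) + 1 : ℤ⟦X⟧) = 1 - X ^ m by ring] at this
    rw [this]
    apply Finset.sum_congr rfl
    intro i _
    rw [map_mul, map_pow, map_neg, map_one, map_natCast, neg_pow, ← pow_mul]
    ring
  -- compute the coefficient
  have hco : coeff k (P ^ n)
      = ∑ i ∈ range (n + 1),
          (-1 : ℤ) ^ i * (n.choose i : ℤ) * ch ((n : ℤ) - 1 + k - i * m) (n - 1) := by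
    rw [hkey, hexp, Finset.sum_mul, map_sum]
    apply Finset.sum_congr rfl
    intro i _
    rw [mul_assoc, coeff_C_mul, coeff_X_pow_mul']
    have hmi : (i : ℤ) * m = ((m * i : ℕ) : ℤ) := by push_cast; ring
    split_ifs with h
    · rw [hQcoeff]
      have hnn : ¬ ((n : ℤ) - 1 + k - i * m < 0) := by omega
      have ht : ((n : ℤ) - 1 + k - i * m).toNat = n - 1 + (k - m * i) := by omega
      rw [ch, if_neg hnn, ht]
    · have hz : ch ((n : ℤ) - 1 + k - i * m) (n - 1) = 0 := by
        rw [ch]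
        split_ifs with h'
        · rfl
        · rw [Nat.choose_eq_zero_of_lt (by omega), Nat.cast_zero]
      rw [hz, mul_zero]
  rw [← hco]
  exact hnonneg n k
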